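/- For every integer n ≥ 1, the polynomial φ_n has a smallest real zero α_n, and QEC(K_1+P_n) = −2α_n − 2. -/

import Mathlib

set_option maxHeartbeats 1000000

open Real Polynomial Polynomial.Chebyshev

/-- The fan graph `K₁ + Pₘ` on vertex set `{0, 1, …, m}`: vertex `0` is joined to
every other vertex, and `1, 2, …, m` form a path. -/
def fanGraph (m : ℕ) : SimpleGraph (Fin (m + 1)) where
  Adj i j := i ≠ j ∧ (i = 0 ∨ j = 0 ∨ (i : ℕ) + 1 = (j : ℕ) ∨ (j : ℕ) + 1 = (i : ℕ))
  symm := by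
    constructor
    intro i j ⟨h1, h2⟩
    exact ⟨h1.symm, by tauto⟩
  loopless := by constructor; intro i ⟨h1, _⟩; exact h1 rfl

/-- The set of values `⟨f, Df⟩` where `D` is the distance matrix of the fan graph
`K₁ + Pₘ` and `f` ranges over unit vectors orthogonal to the all-ones vector;
its maximum is the quadratic embedding constant `QEC(K₁ + Pₘ)`. -/
def qecSet (m : ℕ) : Set ℝ :=
  {r : ℝ | ∃ f : Fin (m + 1) → ℝ, (∑ i, f i ^ 2) = 1 ∧ (∑ i, f i) = 0 ∧
    r = ∑ i, ∑ j, ((fanGraph m).dist i j : ℝ) * f i * f j}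

/-- The key polynomial `φₙ(x) = ((n+1)x² − 3x − n)Uₙ(x) + (x+1)(U_{n-1}(x) + 1)`. -/
noncomputable def phi (n : ℕ) : Polynomial ℝ :=
  (Polynomial.C ((n : ℝ) + 1) * Polynomial.X ^ 2 - Polynomial.C (3 : ℝ) * Polynomial.X -
      Polynomial.C (n : ℝ)) * U ℝ (n : ℤ) +
    (Polynomial.X + 1) * (U ℝ ((n : ℤ) - 1) + 1)

/-! ### Auxiliary material: evaluated Chebyshev polynomials -/

noncomputable def uk (x : ℝ) (m : ℤ) : ℝ := (U ℝ m).eval x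

lemma uk_add_two (x : ℝ) (m : ℤ) : uk x (m+2) = 2*x*uk x (m+1) - uk x m := by
  simp [uk, U_add_two]

lemma uk_zero (x : ℝ) : uk x 0 = 1 := by simp [uk]

lemma uk_one (x : ℝ) : uk x 1 = 2*x := by simp [uk, U_one]

lemma uk_neg_one (x : ℝ) : uk x (-1) = 0 := by simp [uk, U_neg_one]

lemma uk_rec (x : ℝ) (m : ℤ) : uk x (m+1) = 2*x*uk x m - uk x (m-1) := by
  have := uk_add_two x (m-1)
  rw [show (m-1+2) = m+1 from by ring, show (m-1+1) = m from by ring] at this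
  exact this

lemma uk_pell (x : ℝ) : ∀ m : ℕ, uk x m ^ 2 - uk x (m+1) * uk x ((m:ℤ)-1) = 1 := by
  intro m
  induction m with
  | zero => simp [uk_zero, uk_neg_one, uk_one]
  | succ m ih =>
      have h1 : uk x (m+1) = 2*x*uk x m - uk x ((m:ℤ)-1) := by
        have := uk_add_two x ((m:ℤ)-1)
        ring_nf at this ⊢
        convert this using 3 <;> ring
      have h2 : uk x ((m:ℤ)+2) = 2*x*uk x ((m:ℤ)+1) - uk x m := uk_add_two x m
      push_cast
      have hi : ((m:ℤ)+1-1) = (m:ℤ) := by ring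
      rw [hi, show ((m:ℤ)+1+1) = (m:ℤ)+2 from by ring]
      linear_combination ih - uk x m * h2 + uk x ((m:ℤ)+1) * h1

lemma pell_shift (n : ℕ) (hn : 1 ≤ n) (x : ℝ) :
    uk x ((n:ℤ)-1) ^ 2 - uk x n * uk x ((n:ℤ)-2) = 1 := by
  have h := uk_pell x (n-1)
  rw [show ((n-1:ℕ):ℤ) = (n:ℤ)-1 from by omega] at h
  rw [show ((n:ℤ)-1+1) = (n:ℤ) from by ring, show ((n:ℤ)-1-1) = (n:ℤ)-2 from by ring] at h
  exact h

lemma phi_eval (n : ℕ) (x : ℝ) :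
    (phi n).eval x = (((n:ℝ)+1)*x^2 - 3*x - n) * uk x n + (x+1)*(uk x ((n:ℤ)-1) + 1) := by
  simp [phi, uk]

lemma key_identity (n : ℕ) (x : ℝ)
    (hpell : uk x ((n:ℤ)-1) ^ 2 - uk x n * uk x ((n:ℤ)-2) = 1) :
    ((1+x)*(uk x ((n:ℤ)-1)+1)) * ((x-1)*(uk x n - uk x ((n:ℤ)-1) - 1))
      - ((x-1)*uk x n) * (2*n*(x^2-1) + (1+x)*(uk x ((n:ℤ)-1) - uk x ((n:ℤ)-2) - 1) + 2*(x-1)^2)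
      = -2*(x-1) * (phi n).eval x := by
  rw [phi_eval]
  linear_combination (-(x-1)*(x+1))*hpell

/-! ### Auxiliary material: the adjacency of the fan graph -/

noncomputable def aijN (k j : ℕ) : ℝ :=
  if k ≠ j ∧ (k = 0 ∨ j = 0 ∨ k + 1 = j ∨ j + 1 = k) then 1 else 0

lemma aijN_symm (k j : ℕ) : aijN k j = aijN j k := by
  unfold aijN
  have : (k ≠ j ∧ (k = 0 ∨ j = 0 ∨ k + 1 = j ∨ j + 1 = k)) ↔
      (j ≠ k ∧ (j = 0 ∨ k = 0 ∨ j + 1 = k ∨ k + 1 = j)) := by omega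
  rw [if_congr this rfl rfl]

lemma adj_iff_aijN (m : ℕ) (i j : Fin (m+1)) :
    (fanGraph m).Adj i j ↔ ((i:ℕ) ≠ (j:ℕ) ∧ ((i:ℕ) = 0 ∨ (j:ℕ) = 0 ∨ (i:ℕ) + 1 = (j:ℕ) ∨ (j:ℕ) + 1 = (i:ℕ))) := by
  show (i ≠ j ∧ _) ↔ _
  rw [Fin.ne_iff_vne]
  constructor
  · rintro ⟨h1, h2⟩
    refine ⟨h1, ?_⟩
    rcases h2 with h | h | h | h
    · left; rw [h]; rfl
    · right; left; rw [h]; rfl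
    · tauto
    · tauto
  · rintro ⟨h1, h2⟩
    refine ⟨h1, ?_⟩
    rcases h2 with h | h | h | h
    · left; exact Fin.ext (by simpa using h)
    · right; left; exact Fin.ext (by simpa using h)
    · tauto
    · tauto

instance fanAdjDec (m : ℕ) : DecidableRel (fanGraph m).Adj := fun i j =>
  decidable_of_iff _ (adj_iff_aijN m i j).symm

lemma aij_val (m : ℕ) (i j : Fin (m+1)) :
    (if (fanGraph m).Adj i j then (1:ℝ) else 0) = aijN i j := by
  unfold aijN
  rw [if_congr (adj_iff_aijN m i j) rfl rfl]

lemma fan_dist (m : ℕ) (i j : Fin (m+1)) :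
    ((fanGraph m).dist i j : ℝ)
      = 2 - 2*(if i = j then (1:ℝ) else 0) - (if (fanGraph m).Adj i j then (1:ℝ) else 0) := by
  by_cases hij : i = j
  · subst hij
    simp [SimpleGraph.dist_self, (fanGraph m).irrefl]
  · by_cases hadj : (fanGraph m).Adj i j
    · rw [if_neg hij, if_pos hadj]
      have : (fanGraph m).dist i j = 1 := SimpleGraph.dist_eq_one_iff_adj.mpr hadj
      rw [this]; norm_num
    · rw [if_neg hij, if_neg hadj]
      have hi0 : i ≠ 0 := by
        rintro rfl
        exact hadj ⟨hij, Or.inl rfl⟩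
      have hj0 : j ≠ 0 := by
        rintro rfl
        exact hadj ⟨hij, Or.inr (Or.inl rfl)⟩
      have h1 : (fanGraph m).Adj i 0 := ⟨hi0, Or.inr (Or.inl rfl)⟩
      have h2 : (fanGraph m).Adj 0 j := ⟨fun h => hj0 h.symm, Or.inl rfl⟩
      have hle : (fanGraph m).dist i j ≤ 2 := by
        have := SimpleGraph.dist_le (SimpleGraph.Walk.cons h1 (SimpleGraph.Walk.cons h2 SimpleGraph.Walk.nil))
        simpa using this
      have hne0 : (fanGraph m).dist i j ≠ 0 := by
        rw [SimpleGraph.dist_ne_zero_iff_ne_and_reachable]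
        exact ⟨hij, ⟨SimpleGraph.Walk.cons h1 (SimpleGraph.Walk.cons h2 SimpleGraph.Walk.nil)⟩⟩
      have hne1 : (fanGraph m).dist i j ≠ 1 := by
        intro h
        exact hadj (SimpleGraph.dist_eq_one_iff_adj.mp h)
      have : (fanGraph m).dist i j = 2 := by omega
      rw [this]; norm_num

lemma row0 (m : ℕ) (G : ℕ → ℝ) :
    ∑ j : Fin (m+1), aijN 0 (j:ℕ) * G (j:ℕ) = (∑ j : Fin (m+1), G (j:ℕ)) - G 0 := by
  rw [Fin.sum_univ_eq_sum_range (fun j => aijN 0 j * G j), Fin.sum_univ_eq_sum_range G]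
  have claim : ∀ j ∈ Finset.range (m+1), aijN 0 j * G j = G j - (if j = 0 then G j else 0) := by
    intro j _
    unfold aijN
    split_ifs
    all_goals try (exfalso; omega)
    all_goals ring
  rw [Finset.sum_congr rfl claim, Finset.sum_sub_distrib, Finset.sum_ite_eq']
  simp

lemma rowk (m k : ℕ) (hk1 : 1 ≤ k) (hk2 : k ≤ m) (G : ℕ → ℝ) :
    ∑ j : Fin (m+1), aijN k (j:ℕ) * G (j:ℕ)
      = G 0 + (if 2 ≤ k then G (k-1) else 0) + (if k < m then G (k+1) else 0) := by
  rw [Fin.sum_univ_eq_sum_range (fun j => aijN k j * G j)]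
  have claim : ∀ j ∈ Finset.range (m+1), aijN k j * G j
      = (if j = 0 then G j else 0) + (if 2 ≤ k then (if j = k-1 then G j else 0) else 0)
        + (if k < m then (if j = k+1 then G j else 0) else 0) := by
    intro j hj
    simp only [Finset.mem_range] at hj
    unfold aijN
    split_ifs
    all_goals try (exfalso; omega)
    all_goals ring
  rw [Finset.sum_congr rfl claim, Finset.sum_add_distrib, Finset.sum_add_distrib]
  congr 1
  · congr 1
    · rw [Finset.sum_ite_eq']; simp
    · by_cases h2 : 2 ≤ k
      · simp only [h2, if_true]
        rw [Finset.sum_ite_eq']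
        have : k - 1 ∈ Finset.range (m+1) := by simp; omega
        simp [this]
      · simp [h2]
  · by_cases h3 : k < m
    · simp only [h3, if_true]
      rw [Finset.sum_ite_eq']
      have : k + 1 ∈ Finset.range (m+1) := by simp; omega
      simp [this]
    · simp [h3]

lemma dist_sum (m : ℕ) (f : Fin (m+1) → ℝ) (h0 : ∑ i, f i = 0) (h1 : ∑ i, f i ^ 2 = 1) :
    ∑ i, ∑ j, ((fanGraph m).dist i j : ℝ) * f i * f j
      = -2 - ∑ i : Fin (m+1), ∑ j : Fin (m+1), aijN (i:ℕ) (j:ℕ) * f i * f j := by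
  have step : ∀ i j : Fin (m+1), ((fanGraph m).dist i j : ℝ) * f i * f j
      = 2*f i*f j - 2*(if j = i then f i * f j else 0) - aijN (i:ℕ) (j:ℕ) * f i * f j := by
    intro i j
    rw [fan_dist, aij_val]
    by_cases hij : i = j
    · rw [if_pos hij, if_pos hij.symm]; ring
    · rw [if_neg hij, if_neg (Ne.symm hij)]; ring
  simp only [step]
  have inner : ∀ i : Fin (m+1),
      ∑ j, (2*f i*f j - 2*(if j = i then f i * f j else 0) - aijN (i:ℕ) (j:ℕ) * f i * f j)
      = -2 * f i ^ 2 - ∑ j : Fin (m+1), aijN (i:ℕ) (j:ℕ) * f i * f j := by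
    intro i
    rw [Finset.sum_sub_distrib, Finset.sum_sub_distrib]
    have e1 : ∑ j, 2*f i*f j = 0 := by
      rw [← Finset.mul_sum, h0, mul_zero]
    have e2 : ∑ j, (2:ℝ)*(if j = i then f i * f j else 0) = 2 * f i ^ 2 := by
      rw [← Finset.mul_sum, Finset.sum_ite_eq']
      simp [pow_two]
    rw [e1, e2]; ring
  simp only [inner]
  rw [Finset.sum_sub_distrib, ← Finset.mul_sum, h1]
  ring

/-! ### The spectral lemma -/

lemma sum_two_fin (m : ℕ) (hm : 1 ≤ m) (r s : ℝ) (F : Fin (m+1) → ℝ) :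
    ∑ j : Fin (m+1), F j * (if (j:ℕ) = 0 then r else if (j:ℕ) = 1 then s else 0)
      = F 0 * r + F 1 * s := by
  have hv1 : ((1 : Fin (m+1)) : ℕ) = 1 := by
    rw [Fin.val_one']; exact Nat.mod_eq_of_lt (by omega)
  have e10 : (1 : Fin (m+1)) ≠ 0 := by
    rw [Fin.ne_iff_vne, hv1]; simp
  have claim : ∀ j : Fin (m+1), F j * (if (j:ℕ) = 0 then r else if (j:ℕ) = 1 then s else 0)
      = (if j = 0 then F j * r else 0) + (if j = 1 then F j * s else 0) := by
    intro j
    by_cases hj0 : j = 0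
    · subst hj0
      rw [if_pos rfl, if_neg (Ne.symm e10), if_pos (by simp)]
      simp
    · by_cases hj1 : j = 1
      · subst hj1
        rw [if_neg hj0, if_pos rfl, if_neg (by rw [hv1]; simp), if_pos hv1]
        simp
      · have h0 : ((j : Fin (m+1)) : ℕ) ≠ 0 := by
          intro h; exact hj0 (Fin.ext (by simp [h]))
        have h1 : ((j : Fin (m+1)) : ℕ) ≠ 1 := by
          rw [Fin.ext_iff, hv1] at hj1; exact hj1
        rw [if_neg hj0, if_neg hj1, if_neg h0, if_neg h1]
        simp
  rw [Finset.sum_congr rfl (fun j _ => claim j), Finset.sum_add_distrib,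
    Finset.sum_ite_eq', Finset.sum_ite_eq']
  simp

theorem spectral (n : ℕ) (hn : 1 ≤ n) :
    ∃ (lam c : ℝ) (g : Fin (n+1) → ℝ),
      lam ≤ -1 ∧ (∑ i, g i) = 0 ∧ (∑ i, g i ^ 2) = 1 ∧
      (∀ i : Fin (n+1), ∑ j : Fin (n+1), aijN (i:ℕ) (j:ℕ) * g j = lam * g i + c) ∧
      (∀ f : Fin (n+1) → ℝ, (∑ i, f i ^ 2) = 1 → (∑ i, f i) = 0 →
        lam ≤ ∑ i : Fin (n+1), ∑ j : Fin (n+1), aijN (i:ℕ) (j:ℕ) * f i * f j) := by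
  classical
  set N := n + 1 with hN
  have hNR : ((n:ℝ) + 1) ≠ 0 := by positivity
  set deg : Fin N → ℝ := fun i => ∑ j : Fin N, aijN (i:ℕ) (j:ℕ) with hdeg
  set Sd : ℝ := ∑ k : Fin N, deg k with hSd
  set sc : ℝ := Sd/((n:ℝ)+1)^2 + 2/((n:ℝ)+1) with hsc
  set M : Matrix (Fin N) (Fin N) ℝ :=
    fun i j => aijN (i:ℕ) (j:ℕ) - (deg i + deg j)/((n:ℝ)+1) + sc with hM
  have Msym : ∀ i j, M i j = M j i := by
    intro i j
    simp only [hM]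
    rw [aijN_symm]
    ring
  set T : EuclideanSpace ℝ (Fin N) →L[ℝ] EuclideanSpace ℝ (Fin N) :=
    LinearMap.toContinuousLinearMap (Matrix.toEuclideanLin M) with hT
  have F1 : ∀ (v : EuclideanSpace ℝ (Fin N)) (i : Fin N), T v i = ∑ j : Fin N, M i j * v j := by
    intro v i
    rfl
  have F2 : ∀ v w : EuclideanSpace ℝ (Fin N), (inner ℝ v w : ℝ) = ∑ i : Fin N, v i * w i := by
    intro v w
    simp [PiLp.inner_apply, RCLike.inner_apply, starRingEnd_apply, mul_comm]
  have reApp : ∀ v : EuclideanSpace ℝ (Fin N),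
      T.reApplyInnerSelf v = ∑ i : Fin N, (∑ j : Fin N, M i j * v j) * v i := by
    intro v
    rw [ContinuousLinearMap.reApplyInnerSelf_apply]
    rw [show ((RCLike.re : ℝ →+ ℝ) = AddMonoidHom.id ℝ) from rfl]
    simp only [AddMonoidHom.id_apply]
    rw [F2]
    exact Finset.sum_congr rfl fun i _ => by rw [F1]
  have hsym : IsSelfAdjoint T := by
    rw [ContinuousLinearMap.isSelfAdjoint_iff_isSymmetric]
    intro x y
    rw [F2, F2]
    calc ∑ i : Fin N, T x i * y i
        = ∑ i : Fin N, ∑ j : Fin N, M i j * x j * y i := by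
          refine Finset.sum_congr rfl fun i _ => ?_
          rw [F1, Finset.sum_mul]
      _ = ∑ j : Fin N, ∑ i : Fin N, M i j * x j * y i := Finset.sum_comm
      _ = ∑ j : Fin N, x j * T y j := by
          refine Finset.sum_congr rfl fun j _ => ?_
          rw [F1, Finset.mul_sum]
          refine Finset.sum_congr rfl fun i _ => ?_
          rw [Msym]; ring
  have F5 : ∀ i, ∑ j : Fin N, M i j = 2 := by
    intro i
    have e1 : ∑ j : Fin N, M i j
        = deg i - (((n:ℝ)+1) * deg i + Sd)/((n:ℝ)+1) + ((n:ℝ)+1)*sc := by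
      simp only [hM]
      rw [Finset.sum_add_distrib, Finset.sum_sub_distrib, ← Finset.sum_div,
        Finset.sum_add_distrib, Finset.sum_const, Finset.sum_const, Finset.card_univ,
        Fintype.card_fin, nsmul_eq_mul, nsmul_eq_mul]
      push_cast
      have hNc : ((N:ℕ):ℝ) = (n:ℝ)+1 := by simp [hN]
      have hdi : ∑ x : Fin N, aijN (i:ℕ) (x:ℕ) = deg i := rfl
      rw [hNc, hdi, ← hSd]
    rw [e1, hsc]
    field_simp
    ring
  have F6 : ∀ v : Fin N → ℝ, (∑ i : Fin N, v i) = 0 → ∀ i : Fin N,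
      ∑ j : Fin N, M i j * v j
        = (∑ j : Fin N, aijN (i:ℕ) (j:ℕ) * v j) - (∑ j : Fin N, deg j * v j)/((n:ℝ)+1) := by
    intro v hv i
    have expand : ∀ j : Fin N, M i j * v j
        = aijN (i:ℕ) (j:ℕ) * v j - (deg i/((n:ℝ)+1)) * v j - (deg j * v j)/((n:ℝ)+1)
          + sc * v j := by
      intro j; simp only [hM]; ring
    rw [Finset.sum_congr rfl fun j _ => expand j]
    rw [Finset.sum_add_distrib, Finset.sum_sub_distrib, Finset.sum_sub_distrib,
      ← Finset.mul_sum, ← Finset.mul_sum, ← Finset.sum_div, hv]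
    simp
  have F7 : ∀ v : EuclideanSpace ℝ (Fin N), (∑ i : Fin N, v i) = 0 →
      T.reApplyInnerSelf v = ∑ i : Fin N, ∑ j : Fin N, aijN (i:ℕ) (j:ℕ) * v i * v j := by
    intro v hv
    rw [reApp]
    have e1 : ∀ i : Fin N, (∑ j : Fin N, M i j * v j) * v i
        = (∑ j : Fin N, aijN (i:ℕ) (j:ℕ) * v i * v j)
          - ((∑ j : Fin N, deg j * v j)/((n:ℝ)+1)) * v i := by
      intro i
      rw [F6 (fun i => v i) hv i, sub_mul, Finset.sum_mul]
      congr 1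
      refine Finset.sum_congr rfl fun j _ => ?_
      ring
    rw [Finset.sum_congr rfl fun i _ => e1 i, Finset.sum_sub_distrib, ← Finset.mul_sum, hv]
    simp
  have hv1N : ((1 : Fin N) : ℕ) = 1 := by
    rw [Fin.val_one']; exact Nat.mod_eq_of_lt (by omega)
  set r : ℝ := (Real.sqrt 2)⁻¹ with hrdef
  have hr2 : r^2 = 1/2 := by
    have h : Real.sqrt 2 ^ 2 = 2 := Real.sq_sqrt (by norm_num)
    rw [hrdef, inv_pow, h]
    norm_num
  set f₀ : EuclideanSpace ℝ (Fin N) :=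
    WithLp.toLp 2 (fun i : Fin N => if (i:ℕ) = 0 then r else if (i:ℕ) = 1 then -r else 0) with hf₀
  have hf₀app : ∀ i : Fin N, f₀ i = if (i:ℕ) = 0 then r else if (i:ℕ) = 1 then -r else 0 :=
    fun i => rfl
  have hf₀0 : f₀ 0 = r := by rw [hf₀app]; simp
  have hf₀1 : f₀ 1 = -r := by rw [hf₀app, hv1N]; simp
  have hf₀sum : ∑ i : Fin N, f₀ i = 0 := by
    have := sum_two_fin n hn r (-r) (fun _ => 1)
    simpa [hf₀app] using this
  have hf₀sq : ∑ i : Fin N, f₀ i ^ 2 = 1 := by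
    have h := sum_two_fin n hn r (-r) (fun i => f₀ i)
    have e : ∀ i : Fin N, f₀ i ^ 2 = f₀ i * (if (i:ℕ) = 0 then r else if (i:ℕ) = 1 then -r else 0) := by
      intro i; rw [← hf₀app i]; ring
    rw [Finset.sum_congr rfl fun i _ => e i, h, hf₀0, hf₀1]
    nlinarith [hr2]
  have hf₀norm : ‖f₀‖ = 1 := by
    rw [EuclideanSpace.norm_eq]
    have : ∑ i : Fin N, ‖f₀ i‖^2 = 1 := by
      rw [← hf₀sq]
      exact Finset.sum_congr rfl fun i _ => by rw [Real.norm_eq_abs, sq_abs]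
    rw [this, Real.sqrt_one]
  have hQf₀ : ∑ i : Fin N, ∑ j : Fin N, aijN (i:ℕ) (j:ℕ) * f₀ i * f₀ j = -1 := by
    have inner : ∀ i : Fin N, ∑ j : Fin N, aijN (i:ℕ) (j:ℕ) * f₀ i * f₀ j
        = (aijN (i:ℕ) 0 * r + aijN (i:ℕ) 1 * (-r)) * f₀ i := by
      intro i
      have h := sum_two_fin n hn r (-r) (fun j => aijN (i:ℕ) (j:ℕ) * f₀ i)
      have e : ∀ j : Fin N, aijN (i:ℕ) (j:ℕ) * f₀ i * f₀ j
          = (fun j : Fin N => aijN (i:ℕ) (j:ℕ) * f₀ i) j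
            * (if (j:ℕ) = 0 then r else if (j:ℕ) = 1 then -r else 0) := by
        intro j; rw [← hf₀app j]
      rw [Finset.sum_congr rfl fun j _ => e j, h]
      simp only [Fin.val_zero, hv1N]
      ring
    rw [Finset.sum_congr rfl fun i _ => inner i]
    have h2 := sum_two_fin n hn r (-r) (fun i : Fin N => aijN (i:ℕ) 0 * r + aijN (i:ℕ) 1 * (-r))
    have e2 : ∀ i : Fin N, (aijN (i:ℕ) 0 * r + aijN (i:ℕ) 1 * (-r)) * f₀ i
        = (fun i : Fin N => aijN (i:ℕ) 0 * r + aijN (i:ℕ) 1 * (-r)) i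
          * (if (i:ℕ) = 0 then r else if (i:ℕ) = 1 then -r else 0) := by
      intro i; rw [← hf₀app i]
    rw [Finset.sum_congr rfl fun i _ => e2 i, h2]
    simp only [Fin.val_zero, hv1N]
    have a00 : aijN 0 0 = 0 := by norm_num [aijN]
    have a01 : aijN 0 1 = 1 := by norm_num [aijN]
    have a10 : aijN 1 0 = 1 := by norm_num [aijN]
    have a11 : aijN 1 1 = 0 := by norm_num [aijN]
    rw [a00, a01, a10, a11]
    nlinarith [hr2]
  obtain ⟨g₀, hg₀mem, hg₀min⟩ :=
    (isCompact_sphere (0 : EuclideanSpace ℝ (Fin N)) 1).exists_isMinOn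
      ⟨f₀, by simpa using hf₀norm⟩ T.reApplyInnerSelf_continuous.continuousOn
  have hg₀norm : ‖g₀‖ = 1 := by simpa using hg₀mem
  have hg₀ne : g₀ ≠ 0 := by
    intro h; rw [h] at hg₀norm; simp at hg₀norm
  have hmin' : IsMinOn T.reApplyInnerSelf (Metric.sphere 0 ‖g₀‖) g₀ := by
    rwa [hg₀norm]
  have hEV := hsym.hasEigenvector_of_isMinOn hg₀ne hmin'
  set lam : ℝ := ↑(⨅ x : { x : EuclideanSpace ℝ (Fin N) // x ≠ 0 }, T.rayleighQuotient x) with hlamdef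
  have heig : T g₀ = lam • g₀ := hEV.apply_eq_smul
  have hcomp : ∀ i : Fin N, ∑ j : Fin N, M i j * g₀ j = lam * g₀ i := by
    intro i
    rw [← F1 g₀ i, heig]
    simp
  have hlamval : T.reApplyInnerSelf g₀ = lam := by
    rw [ContinuousLinearMap.reApplyInnerSelf_apply]
    rw [show ((RCLike.re : ℝ →+ ℝ) = AddMonoidHom.id ℝ) from rfl]
    simp only [AddMonoidHom.id_apply]
    rw [heig, real_inner_smul_left, real_inner_self_eq_norm_sq, hg₀norm]
    norm_num
  have hlam1 : lam ≤ -1 := by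
    have h : T.reApplyInnerSelf g₀ ≤ T.reApplyInnerSelf f₀ := hg₀min (by simpa using hf₀norm)
    have h2 : T.reApplyInnerSelf f₀ = -1 := by rw [F7 f₀ hf₀sum, hQf₀]
    rw [hlamval, h2] at h
    exact h
  have hsumg : ∑ i : Fin N, g₀ i = 0 := by
    have h2 : ∑ i : Fin N, (∑ j : Fin N, M i j * g₀ j) = 2 * ∑ j : Fin N, g₀ j := by
      rw [Finset.sum_comm]
      calc ∑ j : Fin N, ∑ i : Fin N, M i j * g₀ j
          = ∑ j : Fin N, (∑ i : Fin N, M j i) * g₀ j := by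
            refine Finset.sum_congr rfl fun j _ => ?_
            rw [Finset.sum_mul]
            exact Finset.sum_congr rfl fun i _ => by rw [Msym]
        _ = ∑ j : Fin N, 2 * g₀ j := by
            refine Finset.sum_congr rfl fun j _ => ?_
            rw [F5]
        _ = 2 * ∑ j : Fin N, g₀ j := by rw [Finset.mul_sum]
    have h3 : ∑ i : Fin N, (∑ j : Fin N, M i j * g₀ j) = lam * ∑ i : Fin N, g₀ i := by
      rw [Finset.sum_congr rfl fun i _ => hcomp i, Finset.mul_sum]
    have h4 : (lam - 2) * ∑ i : Fin N, g₀ i = 0 := by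
      rw [sub_mul]
      rw [h2] at h3
      linarith
    have h5 : lam - 2 ≠ 0 := by linarith
    exact (mul_eq_zero.mp h4).resolve_left h5
  have hsqg : ∑ i : Fin N, g₀ i ^ 2 = 1 := by
    have h := hg₀norm
    rw [EuclideanSpace.norm_eq] at h
    have h2 : ∑ i : Fin N, ‖g₀ i‖ ^ 2 = 1 := by
      have := Real.sqrt_eq_one.mp h
      exact this
    rw [← h2]
    exact Finset.sum_congr rfl fun i _ => by rw [Real.norm_eq_abs, sq_abs]
  refine ⟨lam, (∑ j : Fin N, deg j * g₀ j)/((n:ℝ)+1), (fun i => g₀ i), hlam1, hsumg, hsqg, ?_, ?_⟩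
  · intro i
    have h := F6 (fun i => g₀ i) hsumg i
    have h2 := hcomp i
    rw [h] at h2
    linarith
  · intro f hf2 hf0
    set v : EuclideanSpace ℝ (Fin N) := WithLp.toLp 2 (fun i => f i) with hv
    have hvnorm : ‖v‖ = 1 := by
      rw [EuclideanSpace.norm_eq]
      have h2 : ∑ i : Fin N, ‖v i‖ ^ 2 = 1 := by
        rw [← hf2]
        exact Finset.sum_congr rfl fun i _ => by rw [Real.norm_eq_abs, sq_abs]
      rw [h2, Real.sqrt_one]
    have h : T.reApplyInnerSelf g₀ ≤ T.reApplyInnerSelf v := hg₀min (by simpa using hvnorm)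
    rw [hlamval, F7 v hf0] at h
    exact h

/-! ### The construction of conditioned eigenvectors -/

noncomputable def Gv (x a b : ℝ) : ℕ → ℝ
  | 0 => a
  | (m+1) => a*(1+x)/(x-1) + b * uk x (m:ℤ) + (a*(1+x)/(x-1)) * uk x ((m:ℤ)-1)

lemma sumU (x : ℝ) : ∀ m : ℕ, (2*x-2) * ∑ i ∈ Finset.range m, uk x (i:ℤ)
    = uk x (m:ℤ) - uk x ((m:ℤ)-1) - 1 := by
  intro m
  induction m with
  | zero => simp [uk_zero, uk_neg_one]
  | succ m ih =>
      rw [Finset.sum_range_succ]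
      have r2 := uk_rec x (m:ℤ)
      push_cast
      rw [show ((m:ℤ)+1-1) = (m:ℤ) from by ring]
      linear_combination ih - r2

theorem construct (n : ℕ) (hn : 1 ≤ n) (x a b : ℝ) (hx : x ≠ 1)
    (h1 : (1+x)*(uk x ((n:ℤ)-1)+1) * a + (x-1)*uk x (n:ℤ) * b = 0)
    (h2 : (2*(n:ℝ)*(x^2-1) + (1+x)*(uk x ((n:ℤ)-1) - uk x ((n:ℤ)-2) - 1) + 2*(x-1)^2) * a
        + (x-1)*(uk x (n:ℤ) - uk x ((n:ℤ)-1) - 1) * b = 0) :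
    (∑ i : Fin (n+1), Gv x a b (i:ℕ) = 0) ∧
    (∀ i : Fin (n+1), ∑ j : Fin (n+1), aijN (i:ℕ) (j:ℕ) * Gv x a b (j:ℕ)
        = 2*x * Gv x a b (i:ℕ) + (-(1+2*x)*a)) := by
  have hx1 : x - 1 ≠ 0 := sub_ne_zero.mpr hx
  set p : ℝ := a*(1+x)/(x-1) with hpdef
  have hp : p * (x-1) = a*(1+x) := by
    rw [hpdef]; field_simp
  have hG0 : Gv x a b 0 = a := rfl
  have hGs : ∀ m : ℕ, Gv x a b (m+1) = p + b * uk x (m:ℤ) + p * uk x ((m:ℤ)-1) := by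
    intro m; rfl
  have hB : b * uk x (n:ℤ) + p * uk x ((n:ℤ)-1) + p = 0 := by
    have key : (x-1) * (b * uk x (n:ℤ) + p * uk x ((n:ℤ)-1) + p) = 0 := by
      linear_combination h1 + (uk x ((n:ℤ)-1) + 1)*hp
    exact (mul_eq_zero.mp key).resolve_left hx1
  have hcast : ((n-1:ℕ):ℤ) = (n:ℤ)-1 := by omega
  have SUn := sumU x n
  have SUn1 := sumU x (n-1)
  rw [hcast, show ((n:ℤ)-1-1) = (n:ℤ)-2 from by ring] at SUn1
  have hshift : ∑ i ∈ Finset.range n, uk x ((i:ℤ)-1) = ∑ i ∈ Finset.range (n-1), uk x (i:ℤ) := by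
    obtain ⟨m, rfl⟩ : ∃ m, n = m + 1 := ⟨n-1, by omega⟩
    rw [Finset.sum_range_succ' (fun i => uk x ((i:ℤ)-1)) m]
    simp only [Nat.cast_zero, zero_sub, uk_neg_one, add_zero, Nat.add_sub_cancel]
    refine Finset.sum_congr rfl fun i _ => ?_
    push_cast
    rw [show ((i:ℤ)+1-1) = (i:ℤ) from by ring]
  have hsumG : ∑ i : Fin (n+1), Gv x a b (i:ℕ) = 0 := by
    rw [Fin.sum_univ_eq_sum_range (fun k => Gv x a b k) (n+1)]
    rw [Finset.sum_range_succ' (fun k => Gv x a b k) n]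
    have e1 : ∀ i ∈ Finset.range n, Gv x a b (i+1) = p + b * uk x (i:ℤ) + p * uk x ((i:ℤ)-1) :=
      fun i _ => hGs i
    rw [Finset.sum_congr rfl e1]
    simp only [hG0]
    rw [Finset.sum_add_distrib, Finset.sum_add_distrib, Finset.sum_const, Finset.card_range,
      ← Finset.mul_sum, ← Finset.mul_sum, hshift, nsmul_eq_mul]
    have key : 2*(x-1)^2 * ((n:ℝ)*p + b*(∑ i ∈ Finset.range n, uk x (i:ℤ))
        + p*(∑ i ∈ Finset.range (n-1), uk x (i:ℤ)) + a) = 0 := by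
      linear_combination h2 + (2*(n:ℝ)*(x-1) + (uk x ((n:ℤ)-1) - uk x ((n:ℤ)-2) - 1))*hp
        + b*(x-1)*SUn + (x-1)*p*SUn1
    have h2x : (2*(x-1)^2 : ℝ) ≠ 0 := by positivity
    exact (mul_eq_zero.mp key).resolve_left h2x
  refine ⟨hsumG, ?_⟩
  intro i
  rcases Nat.eq_zero_or_pos (i:ℕ) with hk0 | hk1
  · rw [hk0]
    rw [row0 n (Gv x a b), Fin.sum_univ_eq_sum_range (fun k => Gv x a b k) (n+1)]
    rw [← Fin.sum_univ_eq_sum_range (fun k => Gv x a b k) (n+1), hsumG, hG0]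
    ring
  · have hkn : (i:ℕ) ≤ n := by omega
    rw [rowk n (i:ℕ) hk1 hkn (Gv x a b)]
    generalize hkk : (i:ℕ) = k at hk1 hkn ⊢
    rcases Nat.lt_or_ge k 2 with hk2 | hk2
    · have hk1' : k = 1 := by omega
      rw [hk1', if_neg (by omega)]
      rcases Nat.lt_or_ge 1 n with h1n | h1n
      · rw [if_pos h1n, hG0, show (1+1 : ℕ) = 2 from rfl, hGs 1, hGs 0]
        push_cast
        rw [uk_zero, uk_one, uk_neg_one]
        linear_combination (-2)*hp
      · have hn1 : n = 1 := by omega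
        rw [if_neg (by omega), hG0, hGs 0]
        push_cast
        rw [uk_zero, uk_neg_one]
        have hB' := hB
        rw [hn1] at hB'
        push_cast at hB'
        rw [uk_one, uk_zero] at hB'
        linear_combination (-1)*hB' + (-2)*hp
    · rw [if_pos hk2]
      obtain ⟨m, rfl⟩ : ∃ m, k = m + 2 := ⟨k-2, by omega⟩
      rw [show (m+2-1 : ℕ) = m+1 from by omega, hGs m, hGs (m+1), hG0]
      have r1 : uk x ((m:ℤ)+2) = 2*x*uk x ((m:ℤ)+1) - uk x (m:ℤ) := uk_add_two x m
      have r2 : uk x ((m:ℤ)+1) = 2*x*uk x (m:ℤ) - uk x ((m:ℤ)-1) := uk_rec x m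
      rcases Nat.lt_or_ge (m+2) n with hmn | hmn
      · rw [if_pos hmn, show (m+2+1 : ℕ) = m+3 from by omega, hGs (m+2)]
        push_cast
        rw [show ((m:ℤ)+1-1) = (m:ℤ) from by ring, show ((m:ℤ)+2-1) = (m:ℤ)+1 from by ring]
        linear_combination b*r1 + p*r2 - 2*hp
      · have hkn' : m + 2 = n := by omega
        rw [if_neg (by omega)]
        have hB' := hB
        rw [← hkn'] at hB'
        push_cast at hB' ⊢
        rw [show ((m:ℤ)+2-1) = (m:ℤ)+1 from by ring] at hB'
        rw [show ((m:ℤ)+1-1) = (m:ℤ) from by ring]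
        linear_combination (-1)*hB' + b*r1 + p*r2 - 2*hp

theorem extract (n : ℕ) (hn : 1 ≤ n) (x : ℝ) (hx : x ≠ 1) (g : Fin (n+1) → ℝ) (c : ℝ)
    (hsum : ∑ i : Fin (n+1), g i = 0)
    (heq : ∀ i : Fin (n+1), ∑ j : Fin (n+1), aijN (i:ℕ) (j:ℕ) * g j = 2*x * g i + c)
    (hgne : ∃ i, g i ≠ 0) :
    (phi n).eval x = 0 := by
  classical
  have hx1 : x - 1 ≠ 0 := sub_ne_zero.mpr hx
  set G : ℕ → ℝ := fun k => if h : k < n+1 then g ⟨k, h⟩ else 0 with hGdef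
  have hgG : ∀ j : Fin (n+1), g j = G (j:ℕ) := by
    intro j
    rw [hGdef]
    simp
    intro h; exact absurd j.isLt (by omega)
  have hsum' : ∑ i : Fin (n+1), G (i:ℕ) = 0 := by
    rw [← hsum]; exact Finset.sum_congr rfl fun i _ => (hgG i).symm
  have heqk : ∀ k : ℕ, k ≤ n → ∑ j : Fin (n+1), aijN k (j:ℕ) * G (j:ℕ) = 2*x * G k + c := by
    intro k hk
    have h := heq ⟨k, by omega⟩
    have e1 : ∑ j : Fin (n+1), aijN k (j:ℕ) * g j = ∑ j : Fin (n+1), aijN k (j:ℕ) * G (j:ℕ) :=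
      Finset.sum_congr rfl fun j _ => by rw [hgG j]
    rw [← e1]
    have e2 : g ⟨k, by omega⟩ = G k := by
      have hk2 : k < n+1 := by omega
      simp only [hGdef]
      rw [dif_pos hk2]
    rw [← e2]
    exact h
  obtain ⟨p, hp⟩ : ∃ p : ℝ, p * (x-1) = G 0 * (1+x) :=
    ⟨G 0 * (1+x)/(x-1), by field_simp⟩
  obtain ⟨b, hb⟩ : ∃ b : ℝ, G 1 = p + b := ⟨G 1 - p, by ring⟩
  have hc : c = -(1+2*x) * G 0 := by
    have h0 := heqk 0 (by omega)
    rw [row0 n G, hsum'] at h0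
    linarith
  have hGform : ∀ m : ℕ, m + 1 ≤ n → G (m+1) = p + b * uk x (m:ℤ) + p * uk x ((m:ℤ)-1) := by
    intro m
    induction m using Nat.strong_induction_on with
    | _ m ih =>
      intro hm
      match m, ih, hm with
      | 0, _, hm =>
        push_cast
        simp only [uk_zero, uk_neg_one]
        rw [hb]; ring
      | 1, ih, hm =>
        have h1 := heqk 1 (by omega)
        rw [rowk n 1 (by omega) (by omega) G, if_neg (by omega), if_pos (by omega)] at h1
        push_cast
        simp only [uk_one, uk_zero]
        linear_combination h1 + 2*x*hb + hc + 2*hp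
      | (m+2), ih, hm =>
        have hprev1 := ih (m+1) (by omega) (by omega)
        have hprev0 := ih m (by omega) (by omega)
        have hk := heqk (m+2) (by omega)
        rw [rowk n (m+2) (by omega) (by omega) G, if_pos (by omega), if_pos (by omega),
          show (m+2-1:ℕ) = m+1 from by omega, show (m+2+1:ℕ) = m+3 from by omega] at hk
        have r1 : uk x ((m:ℤ)+2) = 2*x*uk x ((m:ℤ)+1) - uk x (m:ℤ) := uk_add_two x m
        have r2 : uk x ((m:ℤ)+1) = 2*x*uk x (m:ℤ) - uk x ((m:ℤ)-1) := uk_rec x m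
        push_cast at hprev1 hprev0 ⊢
        rw [show ((m:ℤ)+1-1) = (m:ℤ) from by ring] at hprev1
        rw [show ((m:ℤ)+2-1) = (m:ℤ)+1 from by ring]
        linear_combination hk + 2*x*hprev1 - hprev0 + hc + 2*hp - b*r1 - p*r2
  have hB : b * uk x (n:ℤ) + p * uk x ((n:ℤ)-1) + p = 0 := by
    rcases Nat.lt_or_ge 1 n with h1n | h1n
    · obtain ⟨m, rfl⟩ : ∃ m, n = m + 2 := ⟨n-2, by omega⟩
      have hk := heqk (m+2) (by omega)
      rw [rowk (m+2) (m+2) (by omega) (by omega) G, if_pos (by omega), if_neg (by omega),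
        show (m+2-1:ℕ) = m+1 from by omega] at hk
      have hprev1 := hGform (m+1) (by omega)
      have hprev0 := hGform m (by omega)
      have r1 : uk x ((m:ℤ)+2) = 2*x*uk x ((m:ℤ)+1) - uk x (m:ℤ) := uk_add_two x m
      have r2 : uk x ((m:ℤ)+1) = 2*x*uk x (m:ℤ) - uk x ((m:ℤ)-1) := uk_rec x m
      push_cast at hprev1 hprev0 ⊢
      rw [show ((m:ℤ)+1-1) = (m:ℤ) from by ring] at hprev1
      rw [show ((m:ℤ)+2-1) = (m:ℤ)+1 from by ring]
      linear_combination -hk - 2*x*hprev1 + hprev0 - hc - 2*hp + b*r1 + p*r2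
    · obtain rfl : n = 1 := by omega
      have hk := heqk 1 (by omega)
      rw [rowk 1 1 (by omega) (by omega) G, if_neg (by omega), if_neg (by omega)] at hk
      push_cast
      simp only [uk_one, uk_zero]
      linear_combination -hk - 2*x*hb - hc - 2*hp
  have hrow1 : (1+x)*(uk x ((n:ℤ)-1)+1) * G 0 + (x-1)*uk x (n:ℤ) * b = 0 := by
    linear_combination (x-1)*hB - (uk x ((n:ℤ)-1)+1)*hp
  have hrow2 : (2*(n:ℝ)*(x^2-1) + (1+x)*(uk x ((n:ℤ)-1) - uk x ((n:ℤ)-2) - 1) + 2*(x-1)^2) * G 0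
      + (x-1)*(uk x (n:ℤ) - uk x ((n:ℤ)-1) - 1) * b = 0 := by
    have SUn := sumU x n
    have SUn1 := sumU x (n-1)
    rw [show ((n-1:ℕ):ℤ) = (n:ℤ)-1 from by omega,
      show ((n:ℤ)-1-1) = (n:ℤ)-2 from by ring] at SUn1
    have hshift : ∑ i ∈ Finset.range n, uk x ((i:ℤ)-1) = ∑ i ∈ Finset.range (n-1), uk x (i:ℤ) := by
      obtain ⟨m, rfl⟩ : ∃ m, n = m + 1 := ⟨n-1, by omega⟩
      rw [Finset.sum_range_succ' (fun i => uk x ((i:ℤ)-1)) m]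
      simp only [Nat.cast_zero, zero_sub, uk_neg_one, add_zero, Nat.add_sub_cancel]
      refine Finset.sum_congr rfl fun i _ => ?_
      push_cast
      rw [show ((i:ℤ)+1-1) = (i:ℤ) from by ring]
    have hsumX : G 0 + ((n:ℝ)*p + b*(∑ i ∈ Finset.range n, uk x (i:ℤ))
        + p*(∑ i ∈ Finset.range (n-1), uk x (i:ℤ))) = 0 := by
      have e0 := hsum'
      rw [Fin.sum_univ_eq_sum_range (fun k => G k) (n+1),
        Finset.sum_range_succ' (fun k => G k) n] at e0
      have e1 : ∀ i ∈ Finset.range n, G (i+1) = p + b * uk x (i:ℤ) + p * uk x ((i:ℤ)-1) :=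
        fun i hi => hGform i (by simpa using Finset.mem_range.mp hi)
      rw [Finset.sum_congr rfl e1, Finset.sum_add_distrib, Finset.sum_add_distrib,
        Finset.sum_const, Finset.card_range, ← Finset.mul_sum, ← Finset.mul_sum, hshift,
        nsmul_eq_mul] at e0
      linarith
    linear_combination 2*(x-1)^2*hsumX
      - (2*(n:ℝ)*(x-1) + (uk x ((n:ℤ)-1) - uk x ((n:ℤ)-2) - 1))*hp
      - b*(x-1)*SUn - (x-1)*p*SUn1
  have hab : G 0 ≠ 0 ∨ b ≠ 0 := by
    by_contra h
    push_neg at h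
    obtain ⟨ha0, hb0⟩ := h
    have hp0 : p = 0 := by
      have : p * (x-1) = 0 := by rw [hp, ha0]; ring
      exact (mul_eq_zero.mp this).resolve_right hx1
    obtain ⟨i, hi⟩ := hgne
    apply hi
    rw [hgG i]
    rcases Nat.eq_zero_or_pos (i:ℕ) with h0 | h0
    · rw [h0, ha0]
    · obtain ⟨m, hm⟩ : ∃ m, (i:ℕ) = m + 1 := ⟨(i:ℕ)-1, by omega⟩
      rw [hm, hGform m (by omega), hp0, hb0]
      ring
  have hdet : ((1+x)*(uk x ((n:ℤ)-1)+1)) * ((x-1)*(uk x n - uk x ((n:ℤ)-1) - 1))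
      - ((x-1)*uk x n) * (2*(n:ℝ)*(x^2-1) + (1+x)*(uk x ((n:ℤ)-1) - uk x ((n:ℤ)-2) - 1)
        + 2*(x-1)^2) = 0 := by
    rcases hab with ha | hbne
    · have key : G 0 * (((1+x)*(uk x ((n:ℤ)-1)+1)) * ((x-1)*(uk x n - uk x ((n:ℤ)-1) - 1))
          - ((x-1)*uk x n) * (2*(n:ℝ)*(x^2-1) + (1+x)*(uk x ((n:ℤ)-1) - uk x ((n:ℤ)-2) - 1)
            + 2*(x-1)^2)) = 0 := by
        linear_combination ((x-1)*(uk x n - uk x ((n:ℤ)-1) - 1))*hrow1 - ((x-1)*uk x n)*hrow2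
      exact (mul_eq_zero.mp key).resolve_left ha
    · have key : b * (((1+x)*(uk x ((n:ℤ)-1)+1)) * ((x-1)*(uk x n - uk x ((n:ℤ)-1) - 1))
          - ((x-1)*uk x n) * (2*(n:ℝ)*(x^2-1) + (1+x)*(uk x ((n:ℤ)-1) - uk x ((n:ℤ)-2) - 1)
            + 2*(x-1)^2)) = 0 := by
        linear_combination ((1+x)*(uk x ((n:ℤ)-1)+1))*hrow2
          - (2*(n:ℝ)*(x^2-1) + (1+x)*(uk x ((n:ℤ)-1) - uk x ((n:ℤ)-2) - 1) + 2*(x-1)^2)*hrow1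
      exact (mul_eq_zero.mp key).resolve_left hbne
  have hkey := key_identity n x (pell_shift n hn x)
  rw [hdet] at hkey
  have h2 : (x-1) * (phi n).eval x = 0 := by linarith
  exact (mul_eq_zero.mp h2).resolve_left hx1

theorem root_witness (n : ℕ) (hn : 1 ≤ n) (y : ℝ) (hy : y ≠ 1) (hroot : (phi n).eval y = 0) :
    ∃ f : Fin (n+1) → ℝ, (∑ i, f i ^ 2) = 1 ∧ (∑ i, f i) = 0 ∧
      (∑ i : Fin (n+1), ∑ j : Fin (n+1), aijN (i:ℕ) (j:ℕ) * f i * f j) = 2*y := by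
  classical
  have hy1 : y - 1 ≠ 0 := sub_ne_zero.mpr hy
  set u := uk y (n:ℤ) with hu
  set v := uk y ((n:ℤ)-1) with hv
  set w := uk y ((n:ℤ)-2) with hw
  set A11 := (1+y)*(v+1) with hA11
  set A12 := (y-1)*u with hA12
  set A21 := (2*(n:ℝ)*(y^2-1) + (1+y)*(v - w - 1) + 2*(y-1)^2) with hA21
  set A22 := (y-1)*(u - v - 1) with hA22
  have hdet : A11 * A22 - A12 * A21 = 0 := by
    have := key_identity n y (pell_shift n hn y)
    rw [hroot] at this
    rw [hA11, hA12, hA21, hA22, hu, hv, hw]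
    linarith [this]
  have hab : ∃ a b : ℝ, (a ≠ 0 ∨ b ≠ 0) ∧ A11 * a + A12 * b = 0 ∧ A21 * a + A22 * b = 0 := by
    by_cases hA : A11 = 0 ∧ A12 = 0
    · by_cases hA2 : A21 = 0 ∧ A22 = 0
      · exact ⟨1, 0, Or.inl one_ne_zero, by rw [hA.1, hA.2]; ring, by rw [hA2.1, hA2.2]; ring⟩
      · refine ⟨A22, -A21, ?_, by rw [hA.1, hA.2]; ring, by ring⟩
        rcases not_and_or.mp hA2 with h | h
        · exact Or.inr (by simpa using h)
        · exact Or.inl h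
    · refine ⟨A12, -A11, ?_, by ring, by linear_combination -hdet⟩
      rcases not_and_or.mp hA with h | h
      · exact Or.inr (by simpa using h)
      · exact Or.inl h
  obtain ⟨a, b, habne, h1, h2⟩ := hab
  have h1' : (1+y)*(uk y ((n:ℤ)-1)+1) * a + (y-1)*uk y (n:ℤ) * b = 0 := by
    rw [← hv, ← hu, ← mul_assoc] at *
    linear_combination h1
  have h2' : (2*(n:ℝ)*(y^2-1) + (1+y)*(uk y ((n:ℤ)-1) - uk y ((n:ℤ)-2) - 1) + 2*(y-1)^2) * a
      + (y-1)*(uk y (n:ℤ) - uk y ((n:ℤ)-1) - 1) * b = 0 := by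
    rw [← hv, ← hu, ← hw]
    linear_combination h2
  obtain ⟨hsumG, heqs⟩ := construct n hn y a b hy h1' h2'
  set g : Fin (n+1) → ℝ := fun i => Gv y a b (i:ℕ) with hg
  have hgne : ∃ i : Fin (n+1), g i ≠ 0 := by
    by_cases ha : a ≠ 0
    · exact ⟨0, by simpa [hg] using (show Gv y a b 0 ≠ 0 from ha)⟩
    · push_neg at ha
      have hb : b ≠ 0 := habne.resolve_left (by simp [ha])
      refine ⟨1, ?_⟩
      have hval : ((1 : Fin (n+1)) : ℕ) = 1 := by
        rw [Fin.val_one']; exact Nat.mod_eq_of_lt (by omega)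
      rw [hg]
      simp only [hval]
      show Gv y a b 1 ≠ 0
      show a*(1+y)/(y-1) + b * uk y ((0:ℕ):ℤ) + (a*(1+y)/(y-1)) * uk y (((0:ℕ):ℤ)-1) ≠ 0
      rw [ha]
      push_cast
      simp [uk, U_neg_one, hb]
  set t := ∑ i : Fin (n+1), g i ^ 2 with ht
  have htpos : 0 < t := by
    obtain ⟨i, hi⟩ := hgne
    refine Finset.sum_pos' (fun j _ => sq_nonneg _) ⟨i, Finset.mem_univ i, ?_⟩
    exact pow_two_pos_of_ne_zero hi
  set st := Real.sqrt t with hstdef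
  have hst2 : st ^ 2 = t := Real.sq_sqrt htpos.le
  have hstne : st ≠ 0 := by
    rw [hstdef]
    exact ne_of_gt (Real.sqrt_pos.mpr htpos)
  have hstt : st * st = t := by rw [← sq]; exact hst2
  refine ⟨fun i => g i / st, ?_, ?_, ?_⟩
  · have e : ∀ i : Fin (n+1), (g i / st)^2 = g i ^2 / t := by
      intro i; rw [div_pow, hst2]
    rw [Finset.sum_congr rfl fun i _ => e i, ← Finset.sum_div, ← ht, div_self (ne_of_gt htpos)]
  · rw [← Finset.sum_div]
    have : ∑ i : Fin (n+1), g i = 0 := hsumG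
    rw [this, zero_div]
  · have hQ : ∑ i : Fin (n+1), ∑ j : Fin (n+1), aijN (i:ℕ) (j:ℕ) * g i * g j = 2*y*t := by
      have inner : ∀ i : Fin (n+1), ∑ j : Fin (n+1), aijN (i:ℕ) (j:ℕ) * g i * g j
          = g i * (2*y * g i + (-(1+2*y)*a)) := by
        intro i
        rw [← heqs i, Finset.mul_sum]
        refine Finset.sum_congr rfl fun j _ => ?_
        ring
      rw [Finset.sum_congr rfl fun i _ => inner i]
      have expand : ∀ i : Fin (n+1), g i * (2*y * g i + (-(1+2*y)*a))
          = 2*y * g i^2 + (-(1+2*y)*a) * g i := by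
        intro i; ring
      rw [Finset.sum_congr rfl fun i _ => expand i, Finset.sum_add_distrib,
        ← Finset.mul_sum, ← Finset.mul_sum, hsumG, ← ht]
      ring
    have e : ∀ i j : Fin (n+1), aijN (i:ℕ) (j:ℕ) * (g i / st) * (g j / st)
        = (aijN (i:ℕ) (j:ℕ) * g i * g j) / t := by
      intro i j
      rw [← hstt]
      field_simp
    have edouble : ∑ i : Fin (n+1), ∑ j : Fin (n+1), aijN (i:ℕ) (j:ℕ) * (g i / st) * (g j / st)
        = (∑ i : Fin (n+1), ∑ j : Fin (n+1), aijN (i:ℕ) (j:ℕ) * g i * g j) / t := by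
      rw [Finset.sum_div]
      refine Finset.sum_congr rfl fun i _ => ?_
      rw [Finset.sum_div]
      exact Finset.sum_congr rfl fun j _ => e i j
    rw [edouble, hQ]
    field_simp

/-- For every `n ≥ 1`, the polynomial `φₙ` has a smallest real
zero `αₙ`, and `QEC(K₁ + Pₙ) = −2αₙ − 2`. -/
theorem qec_fan_eq_minimal_zero_phi (n : ℕ) (hn : 1 ≤ n) :
    ∃ α : ℝ, IsLeast {x : ℝ | (phi n).eval x = 0} α ∧
      IsGreatest (qecSet n) (-2 * α - 2) := by
  obtain ⟨lam, c, g, hlam1, hsum, hsq, heqs, hmin⟩ := spectral n hn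
  have hQg : ∑ i : Fin (n+1), ∑ j : Fin (n+1), aijN (i:ℕ) (j:ℕ) * g i * g j = lam := by
    have inner : ∀ i : Fin (n+1), ∑ j : Fin (n+1), aijN (i:ℕ) (j:ℕ) * g i * g j
        = g i * (lam * g i + c) := by
      intro i
      rw [← heqs i, Finset.mul_sum]
      exact Finset.sum_congr rfl fun j _ => by ring
    rw [Finset.sum_congr rfl fun i _ => inner i]
    have expand : ∀ i : Fin (n+1), g i * (lam * g i + c) = lam * g i^2 + c * g i :=
      fun i => by ring
    rw [Finset.sum_congr rfl fun i _ => expand i, Finset.sum_add_distrib,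
      ← Finset.mul_sum, ← Finset.mul_sum, hsum, hsq]
    ring
  refine ⟨lam/2, ⟨?_, ?_⟩, ?_, ?_⟩
  · show (phi n).eval (lam/2) = 0
    have hx1 : lam/2 ≠ 1 := by
      intro h
      have : lam = 2 := by linarith
      linarith
    apply extract n hn (lam/2) hx1 g c hsum
    · intro i
      rw [show 2*(lam/2) = lam from by ring]
      exact heqs i
    · by_contra hall
      push_neg at hall
      have hz : ∑ i : Fin (n+1), g i ^ 2 = 0 :=
        Finset.sum_eq_zero fun i _ => by rw [hall i]; ring
      rw [hz] at hsq
      norm_num at hsq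
  · intro z hz
    simp only [Set.mem_setOf_eq] at hz
    by_cases hz1 : z = 1
    · rw [hz1]; linarith
    · obtain ⟨f, hf2, hf0, hQ⟩ := root_witness n hn z hz1 hz
      have h := hmin f hf2 hf0
      rw [hQ] at h
      linarith
  · refine ⟨g, hsq, hsum, ?_⟩
    rw [dist_sum n g hsum hsq, hQg]
    ring
  · rintro rv ⟨f, hf2, hf0, hrval⟩
    rw [hrval, dist_sum n f hf0 hf2]
    have := hmin f hf2 hf0
    linarith
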